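/- arXiv:1502.01774 — 2 statements merged into one kernel-verified Lean document; each statement's English description precedes it below -/
import Mathlib

section
/- Let λ(p) = p^{n+1} + v_n p^{n-1} + ⋯ + v₁ + u/(p-w) with u ≠ 0 and pairwise distinct simple critical points r₁,…,r_{n+2}, none equal to w. Then the sum of the residues of the rational function h₁(z) = (λ(z)-λ(r_i))/(λ'(z)(z-r_i)²) over all its finite poles equals the negative of its residue at infinity, and the residue of h₁ at infinity equals -(1-n)/(2(n+1)) minus the residue of h₁ at z = r_i. -/
open Finset

/-- `λ(p) = p^{n+1} + v_n p^{n-1} + ⋯ + v₂ p + v₁ + u/(p-w)`. -/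
noncomputable def lam (n : ℕ) (v : ℕ → ℂ) (u w : ℂ) : ℂ → ℂ :=
  fun p => p ^ (n + 1) + (∑ i ∈ Finset.range n, v (i + 1) * p ^ i) + u / (p - w)

/-- Residue of `f` at a simple pole `A`: `lim_{z→A} (z-A) f(z)`. -/
noncomputable def simpleRes (f : ℂ → ℂ) (A : ℂ) : ℂ :=
  Filter.limUnder (nhdsWithin A {A}ᶜ) (fun z => (z - A) * f z)

/-- Residue of `f` at infinity: `-lim_{z→∞} z f(z)` (valid when `f = c/z + O(z⁻²)`). -/
noncomputable def resInf (f : ℂ → ℂ) : ℂ :=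
  - Filter.limUnder (Bornology.cobounded ℂ) (fun z => z * f z)

section Aux
open Filter Polynomial Bornology

lemma aux_cobounded_compl_finite {s : Set ℂ} (hs : s.Finite) : sᶜ ∈ cobounded ℂ := by
  rw [← Bornology.isCobounded_def]
  exact hs.isBounded.compl

lemma aux_tendsto_inv_pow (m : ℕ) (hm : m ≠ 0) :
    Tendsto (fun z : ℂ => (z ^ m)⁻¹) (cobounded ℂ) (nhds 0) := by
  rw [tendsto_zero_iff_norm_tendsto_zero]
  have h1 : Tendsto (fun z : ℂ => ‖z‖ ^ m) (cobounded ℂ) atTop :=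
    (tendsto_pow_atTop hm).comp tendsto_norm_cobounded_atTop
  simpa [norm_inv, norm_pow, Pi.inv_def] using h1.inv_tendsto_atTop

lemma aux_tendsto_eval_div_pow (p : ℂ[X]) (d : ℕ) (h : p.natDegree ≤ d) :
    Tendsto (fun z : ℂ => p.eval z / z ^ d) (cobounded ℂ) (nhds (p.coeff d)) := by
  have hev : ∀ z : ℂ, z ≠ 0 →
      p.eval z / z ^ d = ∑ k ∈ Finset.range (d + 1), p.coeff k * (z ^ (d - k))⁻¹ := by
    intro z hz
    rw [eval_eq_sum_range' (Nat.lt_succ_of_le h) z, Finset.sum_div]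
    refine Finset.sum_congr rfl fun k hk => ?_
    rw [Finset.mem_range, Nat.lt_succ_iff] at hk
    rw [mul_div_assoc]
    congr 1
    rw [eq_comm, inv_eq_iff_eq_inv, eq_comm, inv_div]
    rw [pow_sub₀ z hz hk, div_eq_mul_inv]
  have hlim : Tendsto (fun z : ℂ => ∑ k ∈ Finset.range (d + 1), p.coeff k * (z ^ (d - k))⁻¹)
      (cobounded ℂ) (nhds (p.coeff d)) := by
    have : Tendsto (fun z : ℂ => ∑ k ∈ Finset.range (d + 1), p.coeff k * (z ^ (d - k))⁻¹)
        (cobounded ℂ)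
        (nhds (∑ k ∈ Finset.range (d + 1), p.coeff k * (if k = d then 1 else 0))) := by
      refine tendsto_finset_sum _ fun k hk => ?_
      rw [Finset.mem_range, Nat.lt_succ_iff] at hk
      rcases eq_or_ne k d with rfl | hkd
      · simpa using (tendsto_const_nhds : Tendsto (fun _ : ℂ => p.coeff k) (cobounded ℂ) _) (x := p.coeff k) (f := cobounded ℂ)
      · have hm : d - k ≠ 0 := by omega
        simpa [hkd] using (aux_tendsto_inv_pow (d - k) hm).const_mul (p.coeff k)
    simpa [Finset.sum_ite_eq' (Finset.range (d+1)) d, Nat.lt_succ_iff] using this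
  refine hlim.congr' ?_ |>.congr' (by rfl)
  · filter_upwards [aux_cobounded_compl_finite (Set.finite_singleton (0:ℂ))] with z hz
    exact (hev z (by simpa using hz)).symm

lemma aux_tendsto_eval_div (A B : ℂ[X]) (d : ℕ) (hA : A.natDegree ≤ d) (hB : B.natDegree ≤ d)
    (hBd : B.coeff d ≠ 0) :
    Tendsto (fun z : ℂ => A.eval z / B.eval z) (cobounded ℂ) (nhds (A.coeff d / B.coeff d)) := by
  have h := (aux_tendsto_eval_div_pow A d hA).div (aux_tendsto_eval_div_pow B d hB) hBd
  refine h.congr' ?_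
  filter_upwards [aux_cobounded_compl_finite (Set.finite_singleton (0:ℂ))] with z hz
  have hz0 : z ≠ 0 := by simpa using hz
  have hzd : (z : ℂ) ^ d ≠ 0 := pow_ne_zero _ hz0
  rcases eq_or_ne (B.eval z) 0 with hb | hb
  · simp [hb, _root_.div_eq_zero_iff, hzd]
  · rw [Pi.div_apply]
    field_simp

noncomputable def auxP (n : ℕ) (v : ℕ → ℂ) : ℂ[X] :=
  X ^ (n + 1) + ∑ i ∈ Finset.range n, C (v (i + 1)) * X ^ i

noncomputable def auxQ (n : ℕ) (v : ℕ → ℂ) (u w : ℂ) : ℂ[X] :=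
  derivative (auxP n v) * (X - C w) ^ 2 - C u

lemma lam_eq (n : ℕ) (v : ℕ → ℂ) (u w z : ℂ) :
    lam n v u w z = (auxP n v).eval z + u / (z - w) := by
  simp [lam, auxP, eval_finset_sum]

lemma deriv_lam (n : ℕ) (v : ℕ → ℂ) (u w z : ℂ) (hz : z ≠ w) :
    deriv (lam n v u w) z = (auxQ n v u w).eval z / (z - w) ^ 2 := by
  have hzw : z - w ≠ 0 := sub_ne_zero.2 hz
  have h1 : HasDerivAt (fun p : ℂ => p ^ (n + 1)) ((n + 1 : ℕ) * z ^ n) z := by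
    simpa using hasDerivAt_pow (n + 1) z
  have h2 : HasDerivAt (fun p : ℂ => ∑ i ∈ Finset.range n, v (i + 1) * p ^ i)
      (∑ i ∈ Finset.range n, v (i + 1) * ((i : ℕ) * z ^ (i - 1))) z := by
    refine HasDerivAt.fun_sum fun i _ => ?_
    simpa using (hasDerivAt_pow i z).const_mul (v (i + 1))
  have h3 : HasDerivAt (fun p : ℂ => u / (p - w)) (u * (-1 / (z - w) ^ 2)) z := by
    have : HasDerivAt (fun p : ℂ => p - w) 1 z := (hasDerivAt_id z).sub_const w
    simpa [div_eq_mul_inv] using (this.inv hzw).const_mul u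
  have h := (h1.fun_add h2).fun_add h3
  rw [show lam n v u w = (fun x : ℂ => x ^ (n + 1) + ∑ i ∈ Finset.range n, v (i + 1) * x ^ i + u / (x - w)) from rfl, h.deriv]
  have hPd : (derivative (auxP n v)).eval z
      = (n + 1 : ℕ) * z ^ n + ∑ i ∈ Finset.range n, v (i + 1) * ((i : ℕ) * z ^ (i - 1)) := by
    simp [auxP, derivative_sum, derivative_X_pow, eval_finset_sum]
  rw [auxQ]
  simp only [eval_sub, eval_mul, eval_pow, eval_X, eval_C, hPd]
  field_simp
  ring


lemma auxP_coeff_ge (n : ℕ) (v : ℕ → ℂ) (m : ℕ) (hm : n + 1 ≤ m) :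
    (auxP n v).coeff m = if m = n + 1 then 1 else 0 := by
  have : ∀ i ∈ Finset.range n, (C (v (i + 1)) * X ^ i).coeff m = 0 := by
    intro i hi
    rw [Finset.mem_range] at hi
    rw [coeff_C_mul, coeff_X_pow, if_neg (by omega)]
    ring
  rw [auxP, coeff_add, finset_sum_coeff, Finset.sum_eq_zero this, add_zero, coeff_X_pow]

lemma auxP_natDegree_le (n : ℕ) (v : ℕ → ℂ) : (auxP n v).natDegree ≤ n + 1 := by
  rw [natDegree_le_iff_coeff_eq_zero]
  intro m hm
  rw [auxP_coeff_ge n v m (by omega), if_neg (by omega)]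

lemma auxPd_coeff (n : ℕ) (v : ℕ → ℂ) (k : ℕ) (hk : n ≤ k) :
    (derivative (auxP n v)).coeff k = if k = n then (n : ℂ) + 1 else 0 := by
  rw [coeff_derivative, auxP_coeff_ge n v (k+1) (by omega)]
  rcases eq_or_ne k n with rfl | h
  · simp
  · rw [if_neg (by omega), if_neg h, zero_mul]

lemma auxPd_natDegree_le (n : ℕ) (v : ℕ → ℂ) : (derivative (auxP n v)).natDegree ≤ n := by
  rw [natDegree_le_iff_coeff_eq_zero]
  intro m hm
  rw [auxPd_coeff n v m (by omega), if_neg (by omega)]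

lemma auxQ_coeff_top (n : ℕ) (v : ℕ → ℂ) (u w : ℂ) :
    (auxQ n v u w).coeff (n + 2) = (n : ℂ) + 1 := by
  have h : (auxQ n v u w).coeff (n+2)
      = ((derivative (auxP n v) * (X - C w)) * (X - C w)).coeff (n + 2) := by
    rw [auxQ, coeff_sub, sq, ← mul_assoc, coeff_C, if_neg (by omega), sub_zero]
  rw [h, show n + 2 = (n + 1) + 1 from rfl, coeff_mul_X_sub_C,
    coeff_mul_X_sub_C, coeff_mul_X_sub_C,
    auxPd_coeff n v n le_rfl, auxPd_coeff n v (n+1) (by omega), auxPd_coeff n v (n+2) (by omega),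
    if_pos rfl, if_neg (by omega), if_neg (by omega)]
  ring

lemma auxQ_natDegree_le (n : ℕ) (v : ℕ → ℂ) (u w : ℂ) :
    (auxQ n v u w).natDegree ≤ n + 2 := by
  refine le_trans (natDegree_sub_le _ _) (max_le ?_ (by simpa using (natDegree_C u).le.trans (by omega)))
  refine le_trans (natDegree_mul_le) ?_
  have h2 : ((X - C w) ^ 2 : ℂ[X]).natDegree ≤ 2 := by
    simpa using natDegree_pow_le (p := (X - C w : ℂ[X])) (n := 2)
  have := auxPd_natDegree_le n v
  omega



lemma prod_X_sub_C_monic {m : ℕ} (r : Fin m → ℂ) :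
    (∏ k : Fin m, (X - C (r k))).Monic :=
  monic_prod_of_monic _ _ fun k _ => monic_X_sub_C (r k)

lemma prod_X_sub_C_natDegree {m : ℕ} (r : Fin m → ℂ) :
    (∏ k : Fin m, (X - C (r k))).natDegree = m := by
  rw [natDegree_prod_of_monic _ _ fun k _ => monic_X_sub_C (r k)]
  simp

lemma auxQ_factor (n : ℕ) (v : ℕ → ℂ) (u w : ℂ) (r : Fin (n + 2) → ℂ)
    (hinj : Function.Injective r) (hroot : ∀ k, (auxQ n v u w).eval (r k) = 0) :
    auxQ n v u w = C ((n : ℂ) + 1) * ∏ k : Fin (n + 2), (X - C (r k)) := by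
  set Q := auxQ n v u w with hQdef
  set pr := ∏ k : Fin (n + 2), (X - C (r k)) with hpr
  have hQtop : Q.coeff (n + 2) = (n : ℂ) + 1 := auxQ_coeff_top n v u w
  have hn1 : ((n : ℂ) + 1) ≠ 0 := by
    exact_mod_cast Nat.cast_add_one_ne_zero (R := ℂ) n
  have hQne : Q ≠ 0 := fun h => hn1 (by rw [← hQtop, h, coeff_zero])
  have hdvd : pr ∣ Q := by
    refine Finset.prod_dvd_of_coprime ?_ fun k _ => dvd_iff_isRoot.2 (hroot k)
    exact Set.Pairwise.mono (Set.subset_univ _)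
      ((pairwise_coprime_X_sub_C hinj).set_pairwise _)
  obtain ⟨c, hc⟩ := hdvd
  have hcne : c ≠ 0 := fun h => hQne (by rw [hc, h, mul_zero])
  have hprdeg : pr.natDegree = n + 2 := prod_X_sub_C_natDegree r
  have hdegQ : Q.natDegree = n + 2 + c.natDegree := by
    rw [hc, natDegree_mul (prod_X_sub_C_monic r).ne_zero hcne, hprdeg]
  have hc0 : c.natDegree = 0 := by
    have h := auxQ_natDegree_le n v u w
    rw [← hQdef] at h
    omega
  obtain ⟨a, rfl⟩ := natDegree_eq_zero.mp hc0
  have ha : a = (n : ℂ) + 1 := by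
    have h1 : Q.coeff (n + 2) = pr.coeff (n + 2) * a := by
      rw [hc, coeff_mul_C]
    have h2 : pr.coeff (n + 2) = 1 := by
      rw [← hprdeg]; exact (prod_X_sub_C_monic r).coeff_natDegree
    rw [hQtop, h2, one_mul] at h1
    exact h1.symm
    
  rw [hc, ha, mul_comm]

lemma auxM_exists_S (n : ℕ) (v : ℕ → ℂ) (u w ri : ℂ)
    (hQ : (auxQ n v u w).eval ri = 0) :
    ∃ S : ℂ[X],
      (auxP n v - C ((auxP n v).eval ri)) * ((X - C w) * C (ri - w)) - C u * (X - C ri)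
        = (X - C ri) ^ 2 * S := by
  set M : ℂ[X] :=
    (auxP n v - C ((auxP n v).eval ri)) * ((X - C w) * C (ri - w)) - C u * (X - C ri) with hM
  have hMroot : M.IsRoot ri := by simp [hM, IsRoot]
  obtain ⟨M₁, hM₁⟩ := dvd_iff_isRoot.2 hMroot
  have hdM : (derivative M).eval ri = 0 := by
    have : (derivative M).eval ri = (auxQ n v u w).eval ri := by
      simp only [hM, auxQ, derivative_mul, derivative_sub, derivative_C, derivative_X,
        derivative_pow, derivative_C_mul, eval_add, eval_sub, eval_mul, eval_pow, eval_X,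
        eval_C, eval_one, zero_mul, mul_zero, zero_sub, sub_zero, mul_one, one_mul, zero_add,
        add_zero, eval_zero, Nat.cast_ofNat, eval_ofNat, eval_natCast]
      ring
    rw [this, hQ]
  have hM₁root : M₁.IsRoot ri := by
    have : (derivative M).eval ri = M₁.eval ri := by
      rw [hM₁]
      simp only [derivative_mul, derivative_sub, derivative_X, derivative_C, sub_zero, one_mul,
        eval_add, eval_mul, eval_sub, eval_X, eval_C, sub_self, zero_mul, add_zero, mul_zero,
        zero_add]
    rwa [hdM, eq_comm] at this
  obtain ⟨S, hS⟩ := dvd_iff_isRoot.2 hM₁root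
  exact ⟨S, by rw [hM₁, hS]; ring⟩

lemma auxM_coeff_top (n : ℕ) (v : ℕ → ℂ) (u w ri : ℂ) :
    ((auxP n v - C ((auxP n v).eval ri)) * ((X - C w) * C (ri - w))
      - C u * (X - C ri)).coeff (n + 2) = ri - w := by
  have h1 : ((auxP n v - C ((auxP n v).eval ri)) * ((X - C w) * C (ri - w))).coeff (n + 2)
      = ((auxP n v - C ((auxP n v).eval ri)) * (X - C w)).coeff (n + 2) * (ri - w) := by
    rw [← mul_assoc, coeff_mul_C]
  have h2 : (auxP n v - C ((auxP n v).eval ri)).coeff (n + 1) = 1 := by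
    rw [coeff_sub, coeff_C, if_neg (by omega), sub_zero, auxP_coeff_ge n v (n+1) le_rfl, if_pos rfl]
  have h3 : (auxP n v - C ((auxP n v).eval ri)).coeff (n + 2) = 0 := by
    rw [coeff_sub, coeff_C, if_neg (by omega), sub_zero, auxP_coeff_ge n v (n+2) (by omega),
      if_neg (by omega)]
  have h4 : ((X : ℂ[X]) - C ri).coeff (n + 2) = 0 := by
    rw [coeff_sub, coeff_X, if_neg (by omega), coeff_C, if_neg (by omega), sub_zero]
  rw [coeff_sub, h1, show n + 2 = (n + 1) + 1 from rfl, coeff_mul_X_sub_C, h2, h3, coeff_C_mul, h4]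
  ring

lemma auxM_natDegree_le (n : ℕ) (v : ℕ → ℂ) (u w ri : ℂ) :
    ((auxP n v - C ((auxP n v).eval ri)) * ((X - C w) * C (ri - w))
      - C u * (X - C ri)).natDegree ≤ n + 2 := by
  refine le_trans (natDegree_sub_le _ _) (max_le ?_ ?_)
  · refine le_trans natDegree_mul_le ?_
    have hP : (auxP n v - C ((auxP n v).eval ri)).natDegree ≤ n + 1 :=
      le_trans (natDegree_sub_le _ _) (max_le (auxP_natDegree_le n v) (by simp))
    have h2 : ((X - C w) * C (ri - w) : ℂ[X]).natDegree ≤ 1 :=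
      le_trans natDegree_mul_le (by simp [natDegree_X_sub_C])
    omega
  · exact le_trans natDegree_mul_le (by simp [natDegree_X_sub_C])

lemma auxS_coeff (n : ℕ) (v : ℕ → ℂ) (u w ri : ℂ) (hw : ri ≠ w) (S : ℂ[X])
    (hS : (auxP n v - C ((auxP n v).eval ri)) * ((X - C w) * C (ri - w)) - C u * (X - C ri)
        = (X - C ri) ^ 2 * S) :
    S.natDegree ≤ n ∧ S.coeff n = ri - w := by
  set M : ℂ[X] :=
    (auxP n v - C ((auxP n v).eval ri)) * ((X - C w) * C (ri - w)) - C u * (X - C ri) with hM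
  have hco : M.coeff (n + 2) = ri - w := auxM_coeff_top n v u w ri
  have hMne : M ≠ 0 := fun h => (sub_ne_zero.2 hw) (by rw [← hco, h, coeff_zero])
  have hSne : S ≠ 0 := fun h => hMne (by rw [hS, h, mul_zero])
  have hXne : ((X - C ri) ^ 2 : ℂ[X]) ≠ 0 := pow_ne_zero _ (X_sub_C_ne_zero ri)
  have hdeg : M.natDegree = 2 + S.natDegree := by
    rw [hS, natDegree_mul hXne hSne, natDegree_pow, natDegree_X_sub_C]
  have hSdeg : S.natDegree ≤ n := by
    have := auxM_natDegree_le n v u w ri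
    rw [← hM] at this
    omega
  refine ⟨hSdeg, ?_⟩
  have e1 : S.coeff (n + 1) = 0 := coeff_eq_zero_of_natDegree_lt (by omega)
  have e2 : S.coeff (n + 2) = 0 := coeff_eq_zero_of_natDegree_lt (by omega)
  have h5 : M.coeff (n + 2) = S.coeff n := by
    rw [hS, show ((X - C ri) ^ 2 * S : ℂ[X]) = S * (X - C ri) * (X - C ri) by ring,
      show n + 2 = (n + 1) + 1 from rfl, coeff_mul_X_sub_C, coeff_mul_X_sub_C,
      coeff_mul_X_sub_C, e1, e2]
    ring
  rw [← h5, hco]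

lemma auxS_eval (n : ℕ) (v : ℕ → ℂ) (u w ri : ℂ) (S : ℂ[X])
    (hS : (auxP n v - C ((auxP n v).eval ri)) * ((X - C w) * C (ri - w)) - C u * (X - C ri)
        = (X - C ri) ^ 2 * S) :
    2 * S.eval ri = (derivative (auxQ n v u w)).eval ri := by
  have h1 : (derivative (derivative ((X - C ri) ^ 2 * S))).eval ri = 2 * S.eval ri := by
    simp only [derivative_mul, derivative_add, derivative_sub, derivative_pow, derivative_X,
      derivative_C, derivative_neg, derivative_one, eval_add, eval_mul, eval_sub, eval_neg,
      eval_pow, eval_X, eval_C, eval_one, eval_ofNat, Nat.cast_ofNat, eval_zero, derivative_zero]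
    ring
  rw [← hS] at h1
  rw [← h1]
  simp only [auxQ, derivative_mul, derivative_add, derivative_sub, derivative_C, derivative_X,
    derivative_pow, derivative_neg, derivative_one, eval_add, eval_sub, eval_mul, eval_neg,
    eval_pow, eval_X, eval_C, eval_one, eval_ofNat, Nat.cast_ofNat, eval_zero, derivative_zero]
  ring

lemma lagrange_coeff_sum {m : ℕ} (N : ℂ[X]) (r : Fin (m + 1) → ℂ)
    (hinj : Function.Injective r) (hdeg : N.natDegree ≤ m) :
    N.coeff m = ∑ k : Fin (m + 1), N.eval (r k) *
      (∏ j ∈ Finset.univ.erase k, (r k - r j))⁻¹ := by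
  have hcard : (Finset.univ : Finset (Fin (m + 1))).card = m + 1 := by simp
  have hdlt : N.degree < ((Finset.univ : Finset (Fin (m + 1))).card : WithBot ℕ) := by
    rw [hcard]
    exact lt_of_le_of_lt degree_le_natDegree (by exact_mod_cast Nat.lt_succ_of_le hdeg)
  have h := Lagrange.eq_interpolate (f := N) (Set.injOn_of_injective hinj) hdlt
  have hb : ∀ k : Fin (m + 1), (Lagrange.basis Finset.univ r k).coeff m
      = (∏ j ∈ Finset.univ.erase k, (r k - r j))⁻¹ := by
    intro k
    have hbs : Lagrange.basis Finset.univ r k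
        = C (∏ j ∈ Finset.univ.erase k, (r k - r j)⁻¹)
          * ∏ j ∈ Finset.univ.erase k, (X - C (r j)) := by
      rw [Lagrange.basis]
      simp only [Lagrange.basisDivisor]
      rw [Finset.prod_mul_distrib]
      congr 1
      simp only [map_prod]
    have hmon : (∏ j ∈ Finset.univ.erase k, ((X : ℂ[X]) - C (r j))).Monic :=
      monic_prod_of_monic _ _ fun j _ => monic_X_sub_C (r j)
    have hdeg2 : (∏ j ∈ Finset.univ.erase k, ((X : ℂ[X]) - C (r j))).natDegree = m := by
      rw [natDegree_prod_of_monic _ _ fun j _ => monic_X_sub_C (r j)]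
      simp [Finset.card_erase_of_mem]
    have hc1 : (∏ j ∈ Finset.univ.erase k, ((X : ℂ[X]) - C (r j))).coeff m = 1 := by
      have hcn := hmon.coeff_natDegree
      rwa [hdeg2] at hcn
    rw [hbs, coeff_C_mul, hc1, mul_one, Finset.prod_inv_distrib]
  conv_lhs => rw [h]
  rw [Lagrange.interpolate_apply, finset_sum_coeff]
  refine Finset.sum_congr rfl fun k _ => ?_
  rw [coeff_C_mul, hb k]

end Aux

section Main
open Filter Polynomial Bornology

/-- for `h₁(z) = (λ(z)-λ(r_i))/(λ'(z)(z-r_i)²)`, the sum of the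
residues of `h₁` over all its finite poles (the points `r_k`) equals the
negative of its residue at infinity, and the residue at infinity equals
`-(1-n)/(2(n+1))` minus the residue of `h₁` at `z = r_i`. -/
theorem residue_theorem_h1
    (n : ℕ) (v : ℕ → ℂ) (u w : ℂ) (hu : u ≠ 0)
    (r : Fin (n + 2) → ℂ) (hinj : Function.Injective r)
    (hw : ∀ k, r k ≠ w)
    (hcrit : ∀ k, deriv (lam n v u w) (r k) = 0)
    (i : Fin (n + 2)) :
    (∑ k : Fin (n + 2),
        simpleRes (fun z => (lam n v u w z - lam n v u w (r i)) /
          (deriv (lam n v u w) z * (z - r i) ^ 2)) (r k))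
      = - resInf (fun z => (lam n v u w z - lam n v u w (r i)) /
          (deriv (lam n v u w) z * (z - r i) ^ 2))
    ∧ resInf (fun z => (lam n v u w z - lam n v u w (r i)) /
          (deriv (lam n v u w) z * (z - r i) ^ 2))
      = -(((1 : ℂ) - (n : ℂ)) / (2 * ((n : ℂ) + 1)))
        - simpleRes (fun z => (lam n v u w z - lam n v u w (r i)) /
            (deriv (lam n v u w) z * (z - r i) ^ 2)) (r i) := by
  classical
  set f : ℂ → ℂ := fun z => (lam n v u w z - lam n v u w (r i)) /
      (deriv (lam n v u w) z * (z - r i) ^ 2) with hf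
  have hn1 : ((n : ℂ) + 1) ≠ 0 := Nat.cast_add_one_ne_zero (R := ℂ) n
  have hriw : r i - w ≠ 0 := sub_ne_zero.2 (hw i)
  -- roots of Q
  have hQroot : ∀ k, (auxQ n v u w).eval (r k) = 0 := by
    intro k
    have h := hcrit k
    rw [deriv_lam n v u w (r k) (hw k)] at h
    rcases (_root_.div_eq_zero_iff).1 h with h' | h'
    · exact h'
    · exact absurd h' (pow_ne_zero _ (sub_ne_zero.2 (hw k)))
  have hfac := auxQ_factor n v u w r hinj hQroot
  have hQeval : ∀ z : ℂ, (auxQ n v u w).eval z = ((n : ℂ) + 1) * ∏ j, (z - r j) := by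
    intro z
    rw [hfac]
    simp [eval_prod]
  obtain ⟨S, hS⟩ := auxM_exists_S n v u w (r i) (hQroot i)
  obtain ⟨hSdeg, hScoeff⟩ := auxS_coeff n v u w (r i) (hw i) S hS
  -- pointwise identity
  have hpt : ∀ z : ℂ, z ≠ w → (∀ j, z ≠ r j) →
      f z = S.eval z * (z - w) / ((r i - w) * (auxQ n v u w).eval z) := by
    intro z hzw hzr
    have hzw' : z - w ≠ 0 := sub_ne_zero.2 hzw
    have hzi : z - r i ≠ 0 := sub_ne_zero.2 (hzr i)
    have hQz : (auxQ n v u w).eval z ≠ 0 := by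
      rw [hQeval]
      exact mul_ne_zero hn1 (Finset.prod_ne_zero_iff.2 fun j _ => sub_ne_zero.2 (hzr j))
    have hMz : (z - r i) ^ 2 * S.eval z
        = ((auxP n v).eval z - (auxP n v).eval (r i)) * ((z - w) * (r i - w))
          - u * (z - r i) := by
      have := congrArg (eval z) hS
      simp only [eval_sub, eval_mul, eval_pow, eval_X, eval_C] at this
      linear_combination -this
    rw [hf]
    simp only
    rw [lam_eq n v u w z, lam_eq n v u w (r i), deriv_lam n v u w z hzw]
    rw [div_eq_div_iff (mul_ne_zero (div_ne_zero hQz (pow_ne_zero _ hzw')) (pow_ne_zero _ hzi)) (mul_ne_zero hriw hQz)]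
    field_simp
    linear_combination (-1 : ℂ) * hMz
  -- finite set to avoid
  have hFfin : ({w} ∪ Set.range r : Set ℂ).Finite :=
    (Set.finite_singleton w).union (Set.finite_range r)
  -- residues at the critical points
  have hres : ∀ k : Fin (n + 2), simpleRes f (r k)
      = S.eval (r k) * (r k - w) /
        ((r i - w) * (((n : ℂ) + 1) * ∏ j ∈ Finset.univ.erase k, (r k - r j))) := by
    intro k
    set g : ℂ → ℂ := fun z => S.eval z * (z - w) /
        ((r i - w) * (((n : ℂ) + 1) * ∏ j ∈ Finset.univ.erase k, (z - r j))) with hg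
    have hprodne : (∏ j ∈ Finset.univ.erase k, (r k - r j)) ≠ 0 := by
      refine Finset.prod_ne_zero_iff.2 fun j hj => ?_
      rw [Finset.mem_erase] at hj
      exact sub_ne_zero.2 fun h => hj.1 (hinj h).symm
    have hden : (r i - w) * (((n : ℂ) + 1) * ∏ j ∈ Finset.univ.erase k, (r k - r j)) ≠ 0 :=
      mul_ne_zero hriw (mul_ne_zero hn1 hprodne)
    have hcont : ContinuousAt g (r k) := by
      refine ContinuousAt.div ?_ ?_ hden
      · exact (S.continuous.mul (continuous_id.sub continuous_const)).continuousAt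
      · exact (continuous_const.mul (continuous_const.mul
          (continuous_finset_prod _ fun j _ => continuous_id.sub continuous_const))).continuousAt
    have hev : ∀ᶠ z in nhdsWithin (r k) {r k}ᶜ, g z = (z - r k) * f z := by
      have hU : ∀ᶠ z in nhdsWithin (r k) {r k}ᶜ, z ∉ (({w} ∪ Set.range r : Set ℂ) \ {r k}) := by
        refine Filter.Eventually.filter_mono nhdsWithin_le_nhds ?_
        refine Filter.eventually_iff_exists_mem.2
          ⟨(({w} ∪ Set.range r : Set ℂ) \ {r k})ᶜ,
            ((hFfin.subset Set.diff_subset).isClosed.isOpen_compl).mem_nhds (by simp), ?_⟩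
        exact fun y hy => hy
      filter_upwards [hU, self_mem_nhdsWithin] with z hzU hzk
      have hzk' : z ≠ r k := hzk
      have hzF : z ∉ ({w} ∪ Set.range r : Set ℂ) := by
        intro hz
        exact hzU ⟨hz, hzk'⟩
      have hzw : z ≠ w := fun h => hzF (Or.inl h)
      have hzr : ∀ j, z ≠ r j := fun j h => hzF (Or.inr ⟨j, h.symm⟩)
      rw [hpt z hzw hzr, hQeval z,
        ← Finset.mul_prod_erase Finset.univ (fun j => z - r j) (Finset.mem_univ k)]
      have hzrk : z - r k ≠ 0 := sub_ne_zero.2 (hzr k)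
      have hprodz : (∏ j ∈ Finset.univ.erase k, (z - r j)) ≠ 0 :=
        Finset.prod_ne_zero_iff.2 fun j _ => sub_ne_zero.2 (hzr j)
      rw [hg]
      simp only
      field_simp
    have ht : Filter.Tendsto (fun z => (z - r k) * f z) (nhdsWithin (r k) {r k}ᶜ)
        (nhds (g (r k))) :=
      (hcont.tendsto.mono_left nhdsWithin_le_nhds).congr' hev
    rw [simpleRes, ht.limUnder_eq, hg]
  -- the numerator polynomial N
  set N : ℂ[X] := S * (X - C w) with hN
  have hNeval : ∀ z : ℂ, N.eval z = S.eval z * (z - w) := by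
    intro z; simp [hN]
  have hNcoeff : N.coeff (n + 1) = r i - w := by
    have hS1 : S.coeff (n + 1) = 0 :=
      coeff_eq_zero_of_natDegree_lt (lt_of_le_of_lt hSdeg (Nat.lt_succ_self n))
    rw [hN, coeff_mul_X_sub_C, hS1, hScoeff]
    ring
  have hNdeg : N.natDegree ≤ n + 1 :=
    natDegree_mul_le.trans (by rw [natDegree_X_sub_C]; omega)
  have hlag := lagrange_coeff_sum (m := n + 1) N r hinj hNdeg
  -- the sum of the residues
  have hsum : (∑ k : Fin (n + 2), simpleRes f (r k)) = ((n : ℂ) + 1)⁻¹ := by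
    have hstep : ∀ k : Fin (n + 2),
        simpleRes f (r k) = N.eval (r k) * (∏ j ∈ Finset.univ.erase k, (r k - r j))⁻¹
          * ((r i - w)⁻¹ * ((n : ℂ) + 1)⁻¹) := by
      intro k
      rw [hres k, hNeval]
      simp only [div_eq_mul_inv, mul_inv]
      ring
    rw [Finset.sum_congr rfl fun k _ => hstep k, ← Finset.sum_mul, ← hlag, hNcoeff]
    field_simp
  -- limit at infinity
  set A : ℂ[X] := X * N with hA
  set B : ℂ[X] := C (r i - w) * auxQ n v u w with hB
  have hAdeg : A.natDegree ≤ n + 2 :=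
    natDegree_mul_le.trans (by rw [natDegree_X]; omega)
  have hAco : A.coeff (n + 2) = r i - w := by
    rw [hA, show n + 2 = (n + 1) + 1 from rfl, coeff_X_mul]; exact hNcoeff
  have hBdeg : B.natDegree ≤ n + 2 := by
    refine natDegree_mul_le.trans ?_
    rw [natDegree_C]
    have := auxQ_natDegree_le n v u w
    omega
  have hBco : B.coeff (n + 2) = (r i - w) * ((n : ℂ) + 1) := by
    rw [hB, coeff_C_mul, auxQ_coeff_top]
  have hBne : B.coeff (n + 2) ≠ 0 := by rw [hBco]; exact mul_ne_zero hriw hn1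
  have htinf := aux_tendsto_eval_div A B (n + 2) hAdeg hBdeg hBne
  have hval : A.coeff (n + 2) / B.coeff (n + 2) = ((n : ℂ) + 1)⁻¹ := by
    rw [hAco, hBco]
    field_simp
  have hevinf : ∀ᶠ z in cobounded ℂ, A.eval z / B.eval z = z * f z := by
    filter_upwards [aux_cobounded_compl_finite hFfin] with z hz
    have hzw : z ≠ w := fun h => hz (Or.inl h)
    have hzr : ∀ j, z ≠ r j := fun j h => hz (Or.inr ⟨j, h.symm⟩)
    rw [hpt z hzw hzr, hA, hB]
    simp only [eval_mul, eval_X, eval_C, hNeval]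
    rw [mul_div_assoc]
  have hinflim : Filter.Tendsto (fun z => z * f z) (cobounded ℂ) (nhds (((n : ℂ) + 1)⁻¹)) := by
    rw [hval] at htinf
    exact htinf.congr' hevinf
  have hresinf : resInf f = -((n : ℂ) + 1)⁻¹ := by
    rw [resInf, hinflim.limUnder_eq]
  -- the residue at r i
  have hprodnei : (∏ j ∈ Finset.univ.erase i, (r i - r j)) ≠ 0 := by
    refine Finset.prod_ne_zero_iff.2 fun j hj => ?_
    rw [Finset.mem_erase] at hj
    exact sub_ne_zero.2 fun h => hj.1 (hinj h).symm
  have hSri : 2 * S.eval (r i) = ((n : ℂ) + 1) * ∏ j ∈ Finset.univ.erase i, (r i - r j) := by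
    rw [auxS_eval n v u w (r i) S hS, hfac,
      ← Finset.mul_prod_erase Finset.univ (fun k => X - C (r k)) (Finset.mem_univ i)]
    simp only [derivative_C_mul, derivative_mul, derivative_sub, derivative_X, derivative_C,
      sub_zero, one_mul, eval_mul, eval_add, eval_C, eval_sub, eval_X, sub_self, zero_mul,
      mul_zero, add_zero, zero_add, eval_prod]
  have hSrine : S.eval (r i) ≠ 0 := by
    intro h
    rw [h, mul_zero] at hSri
    exact (mul_ne_zero hn1 hprodnei) hSri.symm
  have hresi : simpleRes f (r i) = 1 / 2 := by
    rw [hres i, ← hSri]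
    field_simp
  refine ⟨?_, ?_⟩
  · rw [hsum, hresinf, neg_neg]
  · rw [hresinf, hresi]
    field_simp
    ring

end Main
end

section
/- For the variational derivative convention δF/δL := δF/δB + δF/δu + (δF/δw)·(1/u)·(∂ - w) with δF/δB = Σ_{i=1}^n ∂^{-i} δF/δv_i, the variation of any local functional F = ∫ f(v, v_x, …) dx satisfies δF = ∫ res( (δF/δL) δL ) dx, where δL = Σ δv_i ∂^{i-1} + δ[(∂-w)^{-1}u] is the variation of L = ∂^{n+1} + v_n∂^{n-1}+⋯+v₁+(∂-w)^{-1}u. -/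
/-- Generalized binomial coefficient `C(k,l) = k(k-1)⋯(k-l+1)/l!` for `k : ℤ`. -/
noncomputable def genBinom (k : ℤ) (l : ℕ) : ℚ :=
  (∏ i ∈ Finset.range l, ((k : ℚ) - (i : ℚ))) / (Nat.factorial l : ℚ)

/-- Product of pseudo-differential operators (coefficient sequences `ℤ → R`
over a differential ring `(R, d)`), given by the generalized Leibniz rule:
`(AB)_m = Σ_k Σ_l C(k,l) A_k d^l B_{m-k+l}`. -/
noncomputable def pdoMul {R : Type*} [CommRing R] [Algebra ℚ R] (d : R → R)
    (A B : ℤ → R) : ℤ → R :=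
  fun m => ∑ᶠ (k : ℤ) (l : ℕ), genBinom k l • (A k * d^[l] (B (m - k + l)))

/-- The constant pseudo-differential operator `1`. -/
def pdoOne {R : Type*} [CommRing R] : ℤ → R := fun m => if m = 0 then 1 else 0

/-- The pseudo-differential operator `x ∂^k`. -/
def pdoSingle {R : Type*} [CommRing R] (k : ℤ) (x : R) : ℤ → R :=
  fun m => if m = k then x else 0

/-- The differential-operator part `P₊` of a pseudo-differential operator. -/
def pdoPlus {R : Type*} [CommRing R] (A : ℤ → R) : ℤ → R :=
  fun m => if 0 ≤ m then A m else 0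

/-- The residue of a pseudo-differential operator: the coefficient of `∂^{-1}`. -/
def pdoRes {R : Type*} (A : ℤ → R) : R := A (-1)

open Finset in
lemma genBinom_zero' (k : ℤ) : genBinom k 0 = 1 := by simp [genBinom]

lemma genBinom_one' (k : ℤ) : genBinom k 1 = (k : ℚ) := by
  simp [genBinom]

lemma genBinom_zero_left {l : ℕ} (hl : 1 ≤ l) : genBinom 0 l = 0 := by
  unfold genBinom
  rw [Finset.prod_eq_zero (Finset.mem_range.2 hl) (by simp)]
  simp

lemma genBinom_one_left {l : ℕ} (hl : 2 ≤ l) : genBinom 1 l = 0 := by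
  unfold genBinom
  rw [Finset.prod_eq_zero (i := 1) (Finset.mem_range.2 hl) (by simp)]
  simp

lemma genBinom_mul (k : ℤ) {s L : ℕ} (h : s ≤ L) :
    genBinom k s * genBinom (k - (s : ℤ)) (L - s) = (L.choose s : ℚ) * genBinom k L := by
  unfold genBinom
  have hL : L = s + (L - s) := by omega
  have hprod : (∏ i ∈ Finset.range L, ((k : ℚ) - (i : ℚ)))
      = (∏ i ∈ Finset.range s, ((k : ℚ) - (i : ℚ)))
        * ∏ i ∈ Finset.range (L - s), (((k - (s : ℤ) : ℤ) : ℚ) - (i : ℚ)) := by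
    conv_lhs => rw [hL]
    rw [Finset.prod_range_add]
    congr 1
    refine Finset.prod_congr rfl fun i _ => ?_
    push_cast; ring
  rw [Nat.cast_choose ℚ h, hprod]
  have h1 : (Nat.factorial s : ℚ) ≠ 0 := Nat.cast_ne_zero.2 (Nat.factorial_ne_zero s)
  have h2 : (Nat.factorial (L - s) : ℚ) ≠ 0 := Nat.cast_ne_zero.2 (Nat.factorial_ne_zero (L-s))
  have h3 : (Nat.factorial L : ℚ) ≠ 0 := Nat.cast_ne_zero.2 (Nat.factorial_ne_zero L)
  field_simp

section PDOAux
variable {R : Type*} [CommRing R] [Algebra ℚ R] (d : Derivation ℚ R R)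

lemma it_zero (l : ℕ) : (⇑d)^[l] (0 : R) = 0 :=
  Function.iterate_fixed (map_zero d) l

lemma it_add (l : ℕ) (a b : R) : (⇑d)^[l] (a + b) = (⇑d)^[l] a + (⇑d)^[l] b := by
  induction l with
  | zero => rfl
  | succ l ih => simp [Function.iterate_succ_apply', ih]

lemma it_sum {ι : Type*} (l : ℕ) (s : Finset ι) (g : ι → R) :
    (⇑d)^[l] (∑ i ∈ s, g i) = ∑ i ∈ s, (⇑d)^[l] (g i) := by
  classical
  induction s using Finset.induction_on with
  | empty => simp [it_zero]
  | insert _ _ h ih => simp [Finset.sum_insert h, it_add, ih]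

lemma it_leibniz (x y : R) (L : ℕ) :
    (⇑d)^[L] (x * y)
      = ∑ s ∈ Finset.range (L + 1), (L.choose s : ℚ) • ((⇑d)^[s] x * (⇑d)^[L - s] y) := by
  induction L with
  | zero => simp
  | succ L ih =>
    rw [Function.iterate_succ_apply', ih, map_sum]
    have hterm : ∀ s ∈ Finset.range (L + 1),
        d ((L.choose s : ℚ) • ((⇑d)^[s] x * (⇑d)^[L - s] y))
          = (L.choose s : ℚ) • ((⇑d)^[s+1] x * (⇑d)^[L + 1 - (s+1)] y)
            + (L.choose s : ℚ) • ((⇑d)^[s] x * (⇑d)^[L + 1 - s] y) := by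
      intro s hs
      rw [Finset.mem_range] at hs
      have h1 : L + 1 - (s + 1) = L - s := by omega
      have h2 : L + 1 - s = (L - s) + 1 := by omega
      rw [Derivation.map_smul, Derivation.leibniz, h1, h2, Function.iterate_succ_apply',
        Function.iterate_succ_apply', smul_add]
      simp only [smul_eq_mul]
      ring_nf
    rw [Finset.sum_congr rfl hterm, Finset.sum_add_distrib]
    rw [Finset.sum_range_succ' (fun t => ((L+1).choose t : ℚ) • ((⇑d)^[t] x * (⇑d)^[L + 1 - t] y)) (L+1)]
    have hsplit : ∀ t ∈ Finset.range (L + 1),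
        (((L+1).choose (t+1) : ℚ)) • ((⇑d)^[t+1] x * (⇑d)^[L + 1 - (t+1)] y)
          = ((L.choose (t+1) : ℚ)) • ((⇑d)^[t+1] x * (⇑d)^[L + 1 - (t+1)] y)
            + ((L.choose t : ℚ)) • ((⇑d)^[t+1] x * (⇑d)^[L + 1 - (t+1)] y) := by
      intro t _
      rw [Nat.choose_succ_succ, Nat.cast_add, add_smul, add_comm]
    rw [Finset.sum_congr rfl hsplit, Finset.sum_add_distrib]
    have e1 : ∑ t ∈ Finset.range (L + 1), ((L.choose (t+1) : ℚ)) • ((⇑d)^[t+1] x * (⇑d)^[L + 1 - (t+1)] y)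
        = ∑ t ∈ Finset.range (L + 1), ((L.choose t : ℚ)) • ((⇑d)^[t] x * (⇑d)^[L + 1 - t] y)
          - ((L.choose 0 : ℚ)) • ((⇑d)^[0] x * (⇑d)^[L + 1 - 0] y) := by
      rw [eq_sub_iff_add_eq, ← Finset.sum_range_succ' (fun t => ((L.choose t : ℚ)) • ((⇑d)^[t] x * (⇑d)^[L + 1 - t] y)) (L+1)]
      rw [Finset.sum_range_succ]
      simp [Nat.choose_succ_self]
    rw [e1]
    simp only [Nat.choose_zero_right, Nat.cast_one, one_smul, Function.iterate_zero_apply,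
      Nat.choose_self]
    abel

/-- expand a `pdoMul` coefficient as a finite double sum, given upper bounds
on the orders of the two factors. -/
lemma pdoMul_eq_sum (A B : ℤ → R) {NA NB : ℤ}
    (hA : ∀ m, NA ≤ m → A m = 0) (hB : ∀ m, NB ≤ m → B m = 0) (m : ℤ) :
    pdoMul (⇑d) A B m
      = ∑ k ∈ Finset.Ioo (m - NB) NA, ∑ l ∈ Finset.range (NB - m + k).toNat,
          genBinom k l • (A k * (⇑d)^[l] (B (m - k + l))) := by
  unfold pdoMul
  rw [finsum_eq_sum_of_support_subset _ (s := Finset.Ioo (m - NB) NA) ?outer]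
  case outer =>
    intro k hk
    simp only [Function.mem_support] at hk
    by_contra hmem
    apply hk
    have hall : ∀ l : ℕ, genBinom k l • (A k * (⇑d)^[l] (B (m - k + l))) = 0 := by
      intro l
      rcases lt_or_ge k NA with h1 | h1
      · have h2 : k ≤ m - NB := by
          by_contra h3
          exact hmem (by
            simp only [Finset.coe_Ioo, Set.mem_Ioo]
            exact ⟨by omega, h1⟩)
        rw [hB (m - k + l) (by omega), it_zero, mul_zero, smul_zero]
      · rw [hA k h1, zero_mul, smul_zero]
    calc ∑ᶠ (l : ℕ), genBinom k l • (A k * (⇑d)^[l] (B (m - k + l)))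
        = ∑ᶠ (l : ℕ), (0 : R) := finsum_congr hall
      _ = 0 := finsum_zero
  refine Finset.sum_congr rfl fun k hk => ?_
  rw [finsum_eq_sum_of_support_subset _ (s := Finset.range (NB - m + k).toNat) ?inner]
  case inner =>
    intro l hl
    simp only [Function.mem_support] at hl
    simp only [Finset.coe_range, Set.mem_Iio]
    rw [Int.lt_toNat]
    by_contra h
    push_neg at h
    exact hl (by rw [hB (m - k + l) (by omega), it_zero, mul_zero, smul_zero])

lemma pdoMul_ub (A B : ℤ → R) {NA NB : ℤ}
    (hA : ∀ m, NA ≤ m → A m = 0) (hB : ∀ m, NB ≤ m → B m = 0) :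
    ∀ m, NA + NB - 1 ≤ m → pdoMul (⇑d) A B m = 0 := by
  intro m hm
  rw [pdoMul_eq_sum d A B hA hB m]
  refine Finset.sum_eq_zero fun k hk => Finset.sum_eq_zero fun l hl => ?_
  simp only [Finset.mem_Ioo] at hk
  rw [hB (m - k + l) (by omega), it_zero, mul_zero, smul_zero]

omit [Algebra ℚ R] in
lemma pdoSingle_ub (a : ℤ) (x : R) {N : ℤ} (h : a < N) :
    ∀ m, N ≤ m → pdoSingle a x m = 0 := by
  intro m hm
  simp only [pdoSingle, if_neg (by omega : ¬ m = a)]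

lemma pdoMul_zero_left (x : R) (C : ℤ → R) (m : ℤ) :
    pdoMul (⇑d) (pdoSingle 0 x) C m = x * C m := by
  unfold pdoMul
  rw [finsum_eq_single _ (0 : ℤ) ?h0]
  case h0 =>
    intro k hk
    have : ∀ l : ℕ, genBinom k l • (pdoSingle 0 x k * (⇑d)^[l] (C (m - k + l))) = 0 := by
      intro l
      rw [show pdoSingle 0 x k = 0 from if_neg hk, zero_mul, smul_zero]
    rw [finsum_congr this, finsum_zero]
  rw [finsum_eq_single _ (0 : ℕ) ?h1]
  case h1 =>
    intro l hl
    rw [genBinom_zero_left (Nat.one_le_iff_ne_zero.2 hl), zero_smul]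
  simp [pdoSingle, genBinom_zero']

lemma pdoMul_single_single (a : ℤ) (x : R) (b : ℤ) (y : R) (m : ℤ) :
    pdoMul (⇑d) (pdoSingle a x) (pdoSingle b y) m
      = if m ≤ a + b then genBinom a ((a + b - m).toNat) • (x * (⇑d)^[(a+b-m).toNat] y)
        else 0 := by
  unfold pdoMul
  rw [finsum_eq_single _ a ?h0]
  case h0 =>
    intro k hk
    have : ∀ l : ℕ, genBinom k l • (pdoSingle a x k * (⇑d)^[l] (pdoSingle b y (m - k + l))) = 0 := by
      intro l
      rw [show pdoSingle a x k = 0 from if_neg hk, zero_mul, smul_zero]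
    rw [finsum_congr this, finsum_zero]
  rcases le_or_gt m (a + b) with h | h
  · rw [if_pos h, finsum_eq_single _ ((a + b - m).toNat) ?h1]
    case h1 =>
      intro l hl
      have : pdoSingle b y (m - a + l) = 0 := by
        refine if_neg fun hc => hl ?_
        omega
      rw [this, it_zero, mul_zero, smul_zero]
    have harg : m - a + ((a + b - m).toNat : ℤ) = b := by omega
    rw [show pdoSingle a x a = x from if_pos rfl, harg,
      show pdoSingle b y b = y from if_pos rfl]
  · rw [if_neg (by omega)]
    have : ∀ l : ℕ, genBinom a l • (pdoSingle a x a * (⇑d)^[l] (pdoSingle b y (m - a + l))) = 0 := by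
      intro l
      have : pdoSingle b y (m - a + l) = 0 := if_neg (by omega)
      rw [this, it_zero, mul_zero, smul_zero]
    rw [finsum_congr this, finsum_zero]

lemma pdoMul_single_right (A : ℤ → R) {N : ℤ} (hA : ∀ m, N ≤ m → A m = 0)
    (b : ℤ) (y : R) (m : ℤ) :
    pdoMul (⇑d) A (pdoSingle b y) m
      = ∑ k ∈ Finset.Ioo (m - b - 1) N,
          genBinom k ((b - m + k).toNat) • (A k * (⇑d)^[(b - m + k).toNat] y) := by
  rw [pdoMul_eq_sum d A (pdoSingle b y) hA (pdoSingle_ub b y (lt_add_one b)) m]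
  have hmb : m - (b + 1) = m - b - 1 := by ring
  rw [hmb]
  refine Finset.sum_congr rfl fun k hk => ?_
  simp only [Finset.mem_Ioo] at hk
  rw [Finset.sum_eq_single ((b - m + k).toNat) ?other ?notmem]
  case other =>
    intro l _ hl
    have : pdoSingle b y (m - k + l) = 0 := by
      refine if_neg fun hc => hl ?_
      omega
    rw [this, it_zero, mul_zero, smul_zero]
  case notmem =>
    intro hmem
    exfalso
    apply hmem
    rw [Finset.mem_range]
    omega
  have harg : m - k + ((b - m + k).toNat : ℤ) = b := by omega
  rw [harg, show pdoSingle b y b = y from if_pos rfl]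

lemma pdoMul_add_left (A1 A2 B : ℤ → R) {NA NB : ℤ}
    (hA1 : ∀ m, NA ≤ m → A1 m = 0) (hA2 : ∀ m, NA ≤ m → A2 m = 0)
    (hB : ∀ m, NB ≤ m → B m = 0) (m : ℤ) :
    pdoMul (⇑d) (A1 + A2) B m = pdoMul (⇑d) A1 B m + pdoMul (⇑d) A2 B m := by
  rw [pdoMul_eq_sum d A1 B hA1 hB m, pdoMul_eq_sum d A2 B hA2 hB m,
    pdoMul_eq_sum d (A1 + A2) B (fun m hm => by simp [hA1 m hm, hA2 m hm]) hB m,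
    ← Finset.sum_add_distrib]
  refine Finset.sum_congr rfl fun k _ => ?_
  rw [← Finset.sum_add_distrib]
  refine Finset.sum_congr rfl fun l _ => ?_
  simp only [Pi.add_apply, add_mul, smul_add]

lemma pdoMul_add_right (A B1 B2 : ℤ → R) {NA NB : ℤ}
    (hA : ∀ m, NA ≤ m → A m = 0)
    (hB1 : ∀ m, NB ≤ m → B1 m = 0) (hB2 : ∀ m, NB ≤ m → B2 m = 0) (m : ℤ) :
    pdoMul (⇑d) A (B1 + B2) m = pdoMul (⇑d) A B1 m + pdoMul (⇑d) A B2 m := by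
  rw [pdoMul_eq_sum d A B1 hA hB1 m, pdoMul_eq_sum d A B2 hA hB2 m,
    pdoMul_eq_sum d A (B1 + B2) hA (fun m hm => by simp [hB1 m hm, hB2 m hm]) m,
    ← Finset.sum_add_distrib]
  refine Finset.sum_congr rfl fun k _ => ?_
  rw [← Finset.sum_add_distrib]
  refine Finset.sum_congr rfl fun l _ => ?_
  simp only [Pi.add_apply, it_add, mul_add, smul_add]

lemma pdoMul_sum_left {ι : Type*} (s : Finset ι) (F : ι → ℤ → R) (B : ℤ → R) {NA NB : ℤ}
    (hF : ∀ i ∈ s, ∀ m, NA ≤ m → F i m = 0)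
    (hB : ∀ m, NB ≤ m → B m = 0) (m : ℤ) :
    pdoMul (⇑d) (∑ i ∈ s, F i) B m = ∑ i ∈ s, pdoMul (⇑d) (F i) B m := by
  have hsum : ∀ m', NA ≤ m' → (∑ i ∈ s, F i) m' = 0 := fun m' hm' => by
    rw [Finset.sum_apply]
    exact Finset.sum_eq_zero fun i hi => hF i hi m' hm'
  rw [pdoMul_eq_sum d _ B hsum hB m]
  have hterm : ∀ i ∈ s, pdoMul (⇑d) (F i) B m
      = ∑ k ∈ Finset.Ioo (m - NB) NA, ∑ l ∈ Finset.range (NB - m + k).toNat,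
          genBinom k l • (F i k * (⇑d)^[l] (B (m - k + l))) :=
    fun i hi => pdoMul_eq_sum d (F i) B (hF i hi) hB m
  rw [Finset.sum_congr rfl hterm, Finset.sum_comm]
  refine Finset.sum_congr rfl fun k _ => ?_
  rw [Finset.sum_comm]
  refine Finset.sum_congr rfl fun l _ => ?_
  rw [Finset.sum_apply, Finset.sum_mul, Finset.smul_sum]

lemma pdoMul_sum_right {ι : Type*} (s : Finset ι) (A : ℤ → R) (G : ι → ℤ → R) {NA NB : ℤ}
    (hA : ∀ m, NA ≤ m → A m = 0)
    (hG : ∀ i ∈ s, ∀ m, NB ≤ m → G i m = 0) (m : ℤ) :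
    pdoMul (⇑d) A (∑ i ∈ s, G i) m = ∑ i ∈ s, pdoMul (⇑d) A (G i) m := by
  have hsum : ∀ m', NB ≤ m' → (∑ i ∈ s, G i) m' = 0 := fun m' hm' => by
    rw [Finset.sum_apply]
    exact Finset.sum_eq_zero fun i hi => hG i hi m' hm'
  rw [pdoMul_eq_sum d A _ hA hsum m]
  have hterm : ∀ i ∈ s, pdoMul (⇑d) A (G i) m
      = ∑ k ∈ Finset.Ioo (m - NB) NA, ∑ l ∈ Finset.range (NB - m + k).toNat,
          genBinom k l • (A k * (⇑d)^[l] (G i (m - k + l))) :=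
    fun i hi => pdoMul_eq_sum d A (G i) hA (hG i hi) m
  rw [Finset.sum_congr rfl hterm, Finset.sum_comm]
  refine Finset.sum_congr rfl fun k _ => ?_
  rw [Finset.sum_comm]
  refine Finset.sum_congr rfl fun l _ => ?_
  rw [Finset.sum_apply, it_sum, Finset.mul_sum, Finset.smul_sum]

end PDOAux

/-- for the variational derivative convention
`δF/δL := δF/δB + δF/δu + (δF/δw)(1/u)(∂-w)`, `δF/δB = Σ_{i=1}^n ∂^{-i} δF/δv_i`,
the variation of any local functional `F = ∫ f dx` satisfies
`δF = ∫ res((δF/δL) δL) dx`, where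
`δL = Σ δv_i ∂^{i-1} + (∂-w)^{-1} δu + (∂-w)^{-1} δw (∂-w)^{-1} u`
and equalities of local functionals hold up to total `x`-derivatives.
Here `d` is the spatial derivative, `δ` is the variation (a second commuting
derivation), `B = (∂-w)^{-1}`, and `Ev i, Eu, Ew` are the variational
derivatives of `F` with respect to `v_i, u, w`, characterized by
`δf ≡ Σ Ev_i δv_i + Eu δu + Ew δw` modulo `im d`. -/
theorem variation_as_residue_pairing
    {R : Type*} [CommRing R] [Algebra ℚ R]
    (d δ : Derivation ℚ R R) (hcomm : ∀ x : R, d (δ x) = δ (d x))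
    (n : ℕ) (v : ℕ → R) (w u uinv : R) (hu : u * uinv = 1)
    (f : R) (Ev : ℕ → R) (Eu Ew : R)
    (hvar : δ f - ((∑ i ∈ Finset.Icc 1 n, Ev i * δ (v i)) + Eu * δ u + Ew * δ w)
      ∈ Set.range (⇑d))
    (B : ℤ → R)
    (hBneg : ∀ m : ℤ, 0 ≤ m → B m = 0)
    (hBinv : pdoMul (⇑d) (pdoSingle 1 (1 : R) + pdoSingle 0 (-w)) B = pdoOne) :
    δ f - pdoRes (pdoMul (⇑d)
        ((∑ i ∈ Finset.Icc 1 n, pdoMul (⇑d) (pdoSingle (-(i : ℤ)) (1 : R))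
            (pdoSingle 0 (Ev i)))
          + pdoSingle 0 Eu
          + pdoMul (⇑d) (pdoSingle 0 (Ew * uinv))
              (pdoSingle 1 (1 : R) + pdoSingle 0 (-w)))
        ((∑ i ∈ Finset.Icc 1 n, pdoSingle ((i : ℤ) - 1) (δ (v i)))
          + pdoMul (⇑d) B (pdoSingle 0 (δ u))
          + pdoMul (⇑d) (pdoMul (⇑d) (pdoMul (⇑d) B (pdoSingle 0 (δ w))) B)
              (pdoSingle 0 u)))
      ∈ Set.range (⇑d) := by
  classical
  -- abbreviations
  set S : ℕ → ℤ → R :=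
    fun i => pdoMul (⇑d) (pdoSingle (-(i : ℤ)) (1 : R)) (pdoSingle 0 (Ev i)) with hSdef
  set P : ℕ → ℤ → R := fun j => pdoSingle ((j : ℤ) - 1) (δ (v j)) with hPdef
  set X1 : ℤ → R := ∑ i ∈ Finset.Icc 1 n, S i with hX1def
  set X2 : ℤ → R := pdoSingle 0 Eu with hX2def
  set D : ℤ → R := pdoSingle 1 (1 : R) + pdoSingle 0 (-w) with hDdef
  set X3 : ℤ → R := pdoMul (⇑d) (pdoSingle 0 (Ew * uinv)) D with hX3def
  set Y1 : ℤ → R := ∑ j ∈ Finset.Icc 1 n, P j with hY1def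
  set Y2 : ℤ → R := pdoMul (⇑d) B (pdoSingle 0 (δ u)) with hY2def
  set W : ℤ → R := pdoMul (⇑d) B (pdoSingle 0 (δ w)) with hWdef
  set Z : ℤ → R := pdoMul (⇑d) W B with hZdef
  set Y3 : ℤ → R := pdoMul (⇑d) Z (pdoSingle 0 u) with hY3def
  -- upper bound facts
  have hSub : ∀ i : ℕ, 1 ≤ i → ∀ m : ℤ, (0:ℤ) ≤ m → S i m = 0 := by
    intro i hi m hm
    exact pdoMul_ub d _ _ (pdoSingle_ub (-(i:ℤ)) (1:R) (show -(i:ℤ) < -(i:ℤ)+1 by omega))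
      (pdoSingle_ub 0 (Ev i) (show (0:ℤ) < 1 by omega)) m (by omega)
  have hSub2 : ∀ i ∈ Finset.Icc 1 n, ∀ m : ℤ, (2:ℤ) ≤ m → S i m = 0 := by
    intro i hi m hm
    exact hSub i (Finset.mem_Icc.1 hi).1 m (by omega)
  have hX1ub : ∀ m : ℤ, (2:ℤ) ≤ m → X1 m = 0 := by
    intro m hm
    rw [hX1def, Finset.sum_apply]
    exact Finset.sum_eq_zero fun i hi => hSub2 i hi m hm
  have hX2ub : ∀ m : ℤ, (2:ℤ) ≤ m → X2 m = 0 := pdoSingle_ub 0 Eu (by omega)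
  have hDub : ∀ m : ℤ, (2:ℤ) ≤ m → D m = 0 := by
    intro m hm
    rw [hDdef, Pi.add_apply, pdoSingle_ub 1 (1:R) (by omega : (1:ℤ) < 2) m hm,
      pdoSingle_ub 0 (-w) (by omega : (0:ℤ) < 2) m hm, add_zero]
  have hX3ub : ∀ m : ℤ, (2:ℤ) ≤ m → X3 m = 0 := by
    intro m hm
    exact pdoMul_ub d _ _ (pdoSingle_ub 0 (Ew * uinv) (show (0:ℤ) < 1 by omega)) hDub m (by omega)
  have hX12ub : ∀ m : ℤ, (2:ℤ) ≤ m → (X1 + X2) m = 0 := by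
    intro m hm
    rw [Pi.add_apply, hX1ub m hm, hX2ub m hm, add_zero]
  have hPub : ∀ j ∈ Finset.Icc 1 n, ∀ m : ℤ, (n:ℤ) ≤ m → P j m = 0 := by
    intro j hj m hm
    have hj' := (Finset.mem_Icc.1 hj).2
    exact pdoSingle_ub _ _ (by omega : ((j:ℤ) - 1) < (n:ℤ)) m hm
  have hY1ub : ∀ m : ℤ, (n:ℤ) ≤ m → Y1 m = 0 := by
    intro m hm
    rw [hY1def, Finset.sum_apply]
    exact Finset.sum_eq_zero fun j hj => hPub j hj m hm
  have hY2ub0 : ∀ m : ℤ, (0:ℤ) ≤ m → Y2 m = 0 := by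
    intro m hm
    exact pdoMul_ub d _ _ hBneg (pdoSingle_ub 0 (δ u) (show (0:ℤ) < 1 by omega)) m (by omega)
  have hY2ub : ∀ m : ℤ, (n:ℤ) ≤ m → Y2 m = 0 := fun m hm => hY2ub0 m (by omega)
  have hWub : ∀ m : ℤ, (0:ℤ) ≤ m → W m = 0 := by
    intro m hm
    exact pdoMul_ub d _ _ hBneg (pdoSingle_ub 0 (δ w) (show (0:ℤ) < 1 by omega)) m (by omega)
  have hZub : ∀ m : ℤ, (-1:ℤ) ≤ m → Z m = 0 := by
    intro m hm
    exact pdoMul_ub d _ _ hWub hBneg m (by omega)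
  have hY3ub1 : ∀ m : ℤ, (-1:ℤ) ≤ m → Y3 m = 0 := by
    intro m hm
    exact pdoMul_ub d _ _ hZub (pdoSingle_ub 0 u (show (0:ℤ) < 1 by omega)) m (by omega)
  have hY3ub : ∀ m : ℤ, (n:ℤ) ≤ m → Y3 m = 0 := fun m hm => hY3ub1 m (by omega)
  have hYub : ∀ m : ℤ, (n:ℤ) ≤ m → (Y1 + Y2 + Y3) m = 0 := by
    intro m hm
    simp only [Pi.add_apply, hY1ub m hm, hY2ub m hm, hY3ub m hm, add_zero]
  -- basic values of B
  have hDBm : ∀ m : ℤ, pdoMul (⇑d) D B m = pdoOne m := fun m => congrFun hBinv m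
  have hDBexp : ∀ m : ℤ,
      (∑ k ∈ Finset.Ioo (m - 0) 2, ∑ l ∈ Finset.range (0 - m + k).toNat,
        genBinom k l • (pdoSingle 1 (1:R) k * (⇑d)^[l] (B (m - k + l))))
        + (-w) * B m = pdoOne m := by
    intro m
    have h0 := hDBm m
    rw [hDdef, pdoMul_add_left d (pdoSingle 1 (1:R)) (pdoSingle 0 (-w)) B
      (pdoSingle_ub 1 (1:R) (by omega : (1:ℤ) < 2)) (pdoSingle_ub 0 (-w) (by omega : (0:ℤ) < 2))
      hBneg m, pdoMul_zero_left d (-w) B m,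
      pdoMul_eq_sum d (pdoSingle 1 (1:R)) B (NA := 2) (NB := 0)
        (pdoSingle_ub 1 (1:R) (by omega)) hBneg m] at h0
    exact h0
  have hB1 : B (-1) = 1 := by
    have h := hDBexp 0
    rw [show Finset.Ioo ((0:ℤ) - 0) 2 = {1} from by decide, Finset.sum_singleton,
      show ((0:ℤ) - 0 + 1).toNat = 1 from rfl, Finset.sum_range_one] at h
    norm_num [pdoSingle, pdoOne, genBinom_zero', hBneg 0 le_rfl] at h
    linear_combination h
  have hB2 : B (-2) = w := by
    have h := hDBexp (-1)
    rw [show Finset.Ioo ((-1:ℤ) - 0) 2 = {0, 1} from by decide,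
      Finset.sum_pair (by decide : (0:ℤ) ≠ 1)] at h
    rw [show ((0:ℤ) - (-1) + 0).toNat = 1 from rfl,
      show ((0:ℤ) - (-1) + 1).toNat = 2 from rfl, Finset.sum_range_one,
      show (2:ℕ) = 1 + 1 from rfl, Finset.sum_range_succ, Finset.sum_range_one] at h
    norm_num [pdoSingle, pdoOne, genBinom_zero', genBinom_one', hB1] at h
    linear_combination h
  have hX3val : ∀ k : ℤ, X3 k = (Ew * uinv) * D k := fun k => pdoMul_zero_left d _ D k
  have hBsr : ∀ (y : R) (m : ℤ), pdoMul (⇑d) B (pdoSingle 0 y) m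
      = ∑ k ∈ Finset.Ioo (m - 0 - 1) 0,
          genBinom k ((0 - m + k).toNat) • (B k * (⇑d)^[(0 - m + k).toNat] y) :=
    fun y m => pdoMul_single_right d B hBneg 0 y m
  have hY2m1 : Y2 (-1) = δ u := by
    rw [hY2def, hBsr (δ u) (-1),
      show Finset.Ioo ((-1:ℤ) - 0 - 1) 0 = {-1} from by decide, Finset.sum_singleton]
    norm_num [genBinom_zero', hB1]
  have hY2m2 : Y2 (-2) = w * δ u - d (δ u) := by
    rw [hY2def, hBsr (δ u) (-2),
      show Finset.Ioo ((-2:ℤ) - 0 - 1) 0 = {-2, -1} from by decide,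
      Finset.sum_pair (by decide : (-2:ℤ) ≠ -1)]
    norm_num [genBinom_zero', genBinom_one', hB1, hB2]
    ring
  have hWm1 : W (-1) = δ w := by
    rw [hWdef, hBsr (δ w) (-1),
      show Finset.Ioo ((-1:ℤ) - 0 - 1) 0 = {-1} from by decide, Finset.sum_singleton]
    norm_num [genBinom_zero', hB1]
  have hZm2 : Z (-2) = δ w := by
    rw [hZdef, pdoMul_eq_sum d W B (NA := 0) (NB := 0) hWub hBneg (-2),
      show Finset.Ioo ((-2:ℤ) - 0) 0 = {-1} from by decide, Finset.sum_singleton,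
      show ((0:ℤ) - (-2) + (-1)).toNat = 1 from rfl, Finset.sum_range_one]
    norm_num [genBinom_zero', hWm1, hB1]
  have hY3m2 : Y3 (-2) = δ w * u := by
    rw [hY3def, pdoMul_single_right d Z hZub 0 u (-2),
      show Finset.Ioo ((-2:ℤ) - 0 - 1) (-1) = {-2} from by decide, Finset.sum_singleton]
    norm_num [genBinom_zero', hZm2]
  -- the nine pieces
  have hsplit : pdoMul (⇑d) (X1 + X2 + X3) (Y1 + Y2 + Y3) (-1)
      = (pdoMul (⇑d) X1 Y1 (-1) + pdoMul (⇑d) X1 Y2 (-1) + pdoMul (⇑d) X1 Y3 (-1))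
        + (pdoMul (⇑d) X2 Y1 (-1) + pdoMul (⇑d) X2 Y2 (-1) + pdoMul (⇑d) X2 Y3 (-1))
        + (pdoMul (⇑d) X3 Y1 (-1) + pdoMul (⇑d) X3 Y2 (-1) + pdoMul (⇑d) X3 Y3 (-1)) := by
    rw [pdoMul_add_left d (X1 + X2) X3 _ hX12ub hX3ub hYub (-1),
      pdoMul_add_left d X1 X2 _ hX1ub hX2ub hYub (-1),
      pdoMul_add_right d X1 (Y1 + Y2) Y3 hX1ub (fun m hm => by
        rw [Pi.add_apply, hY1ub m hm, hY2ub m hm, add_zero]) hY3ub (-1),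
      pdoMul_add_right d X1 Y1 Y2 hX1ub hY1ub hY2ub (-1),
      pdoMul_add_right d X2 (Y1 + Y2) Y3 hX2ub (fun m hm => by
        rw [Pi.add_apply, hY1ub m hm, hY2ub m hm, add_zero]) hY3ub (-1),
      pdoMul_add_right d X2 Y1 Y2 hX2ub hY1ub hY2ub (-1),
      pdoMul_add_right d X3 (Y1 + Y2) Y3 hX3ub (fun m hm => by
        rw [Pi.add_apply, hY1ub m hm, hY2ub m hm, add_zero]) hY3ub (-1),
      pdoMul_add_right d X3 Y1 Y2 hX3ub hY1ub hY2ub (-1)]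
  have hT11 : pdoMul (⇑d) X1 Y1 (-1)
      = ∑ i ∈ Finset.Icc 1 n, ∑ j ∈ Finset.Icc 1 n, pdoMul (⇑d) (S i) (P j) (-1) := by
    rw [hX1def, pdoMul_sum_left d _ S _ hSub2 hY1ub (-1)]
    refine Finset.sum_congr rfl fun i hi => ?_
    rw [hY1def, pdoMul_sum_right d _ (S i) P (hSub2 i hi) hPub (-1)]
  have hT12 : pdoMul (⇑d) X1 Y2 (-1) = 0 := by
    rw [hX1def, pdoMul_sum_left d _ S _ hSub2 hY2ub (-1)]
    refine Finset.sum_eq_zero fun i hi => ?_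
    exact pdoMul_ub d (S i) Y2 (NA := 0) (NB := 0)
      (fun m hm => hSub i (Finset.mem_Icc.1 hi).1 m hm) hY2ub0 (-1) (by norm_num)
  have hT13 : pdoMul (⇑d) X1 Y3 (-1) = 0 := by
    rw [hX1def, pdoMul_sum_left d _ S _ hSub2 hY3ub (-1)]
    refine Finset.sum_eq_zero fun i hi => ?_
    exact pdoMul_ub d (S i) Y3 (NA := 0) (NB := 0)
      (fun m hm => hSub i (Finset.mem_Icc.1 hi).1 m hm)
      (fun m hm => hY3ub1 m (by omega)) (-1) (by norm_num)
  have hT21 : pdoMul (⇑d) X2 Y1 (-1) = 0 := by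
    rw [hX2def, pdoMul_zero_left d Eu Y1 (-1), hY1def, Finset.sum_apply]
    have hall : ∀ j ∈ Finset.Icc 1 n, P j (-1) = 0 := by
      intro j hj
      have hj1 := (Finset.mem_Icc.1 hj).1
      simp only [hPdef, pdoSingle]
      rw [if_neg (by omega)]
    rw [Finset.sum_eq_zero hall, mul_zero]
  have hT22 : pdoMul (⇑d) X2 Y2 (-1) = Eu * δ u := by
    rw [hX2def, pdoMul_zero_left d Eu Y2 (-1), hY2m1]
  have hT23 : pdoMul (⇑d) X2 Y3 (-1) = 0 := by
    rw [hX2def, pdoMul_zero_left d Eu Y3 (-1), hY3ub1 (-1) (le_refl _), mul_zero]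
  have hD0 : D 0 = -w := by simp [hDdef, pdoSingle]
  have hD1 : D 1 = 1 := by simp [hDdef, pdoSingle]
  have hT31 : pdoMul (⇑d) X3 Y1 (-1) = 0 := by
    rw [hY1def, pdoMul_sum_right d _ X3 P (NA := 2) (NB := (n:ℤ)) hX3ub hPub (-1)]
    refine Finset.sum_eq_zero fun j hj => ?_
    have hj1 := (Finset.mem_Icc.1 hj).1
    simp only [hPdef]
    rw [pdoMul_single_right d X3 hX3ub ((j:ℤ)-1) (δ (v j)) (-1)]
    refine Finset.sum_eq_zero fun k hk => ?_
    rw [Finset.mem_Ioo] at hk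
    rcases eq_or_ne k 1 with rfl | hk1
    · rw [show (((j:ℤ)-1) - (-1) + 1).toNat = j + 1 from by omega,
        genBinom_one_left (by omega), zero_smul]
    rcases eq_or_ne k 0 with rfl | hk0
    · rw [show (((j:ℤ)-1) - (-1) + 0).toNat = j from by omega,
        genBinom_zero_left (by omega), zero_smul]
    · rw [hX3val k, hDdef, Pi.add_apply, pdoSingle, pdoSingle, if_neg hk1, if_neg hk0,
        add_zero, mul_zero, zero_mul, smul_zero]
  have hT32 : pdoMul (⇑d) X3 Y2 (-1) = 0 := by
    rw [pdoMul_eq_sum d X3 Y2 (NA := 2) (NB := 0) hX3ub hY2ub0 (-1),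
      show Finset.Ioo ((-1:ℤ) - 0) 2 = {0, 1} from by decide,
      Finset.sum_pair (by decide : (0:ℤ) ≠ 1),
      show ((0:ℤ) - (-1) + 0).toNat = 1 from rfl,
      show ((0:ℤ) - (-1) + 1).toNat = 2 from rfl, Finset.sum_range_one,
      show (2:ℕ) = 1 + 1 from rfl, Finset.sum_range_succ, Finset.sum_range_one]
    rw [show (-1:ℤ) - 0 + ((0:ℕ):ℤ) = -1 from by norm_num,
      show (-1:ℤ) - 1 + ((0:ℕ):ℤ) = -2 from by norm_num,
      show (-1:ℤ) - 1 + ((1:ℕ):ℤ) = -1 from by norm_num,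
      hY2m1, hY2m2, hX3val 0, hX3val 1, hD0, hD1]
    norm_num [genBinom_zero', genBinom_one']
    ring
  have hT33 : pdoMul (⇑d) X3 Y3 (-1) = Ew * δ w := by
    rw [pdoMul_eq_sum d X3 Y3 (NA := 2) (NB := 0) hX3ub (fun m hm => hY3ub1 m (by omega)) (-1),
      show Finset.Ioo ((-1:ℤ) - 0) 2 = {0, 1} from by decide,
      Finset.sum_pair (by decide : (0:ℤ) ≠ 1),
      show ((0:ℤ) - (-1) + 0).toNat = 1 from rfl,
      show ((0:ℤ) - (-1) + 1).toNat = 2 from rfl, Finset.sum_range_one,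
      show (2:ℕ) = 1 + 1 from rfl, Finset.sum_range_succ, Finset.sum_range_one]
    rw [show (-1:ℤ) - 0 + ((0:ℕ):ℤ) = -1 from by norm_num,
      show (-1:ℤ) - 1 + ((0:ℕ):ℤ) = -2 from by norm_num,
      show (-1:ℤ) - 1 + ((1:ℕ):ℤ) = -1 from by norm_num,
      hY3m2, hY3ub1 (-1) le_rfl, hX3val 0, hX3val 1, hD0, hD1]
    norm_num [genBinom_zero', genBinom_one', it_zero]
    linear_combination Ew * δ w * hu
  -- the double sum
  set M : Submodule ℚ R := LinearMap.range (d : R →ₗ[ℚ] R) with hMdef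
  have hMd : ∀ x : R, d x ∈ M := fun x => ⟨x, rfl⟩
  have hr : ∀ i ∈ Finset.Icc 1 n, ∀ j ∈ Finset.Icc 1 n,
      pdoMul (⇑d) (S i) (P j) (-1) - (if j = i then Ev i * δ (v i) else 0) ∈ M := by
    intro i hi j hj
    have hi1 := (Finset.mem_Icc.1 hi).1
    have hj1 := (Finset.mem_Icc.1 hj).1
    have hSval : ∀ k : ℤ, S i k
        = if k ≤ -(i:ℤ) then genBinom (-(i:ℤ)) ((-(i:ℤ) - k).toNat)
            • ((⇑d)^[(-(i:ℤ) - k).toNat] (Ev i)) else 0 := by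
      intro k
      simp only [hSdef]
      rw [pdoMul_single_single d (-(i:ℤ)) (1:R) 0 (Ev i) k]
      simp only [add_zero, one_mul]
    have hSub' : ∀ m : ℤ, -(i:ℤ) + 1 ≤ m → S i m = 0 := by
      intro m hm
      rw [hSval m, if_neg (by omega)]
    simp only [hPdef]
    rw [pdoMul_single_right d (S i) hSub' ((j:ℤ) - 1) (δ (v j)) (-1)]
    rcases lt_or_ge j i with hlt | hge
    · rw [Finset.sum_eq_zero (fun k hk => absurd (Finset.mem_Ioo.1 hk) (by omega)),
        if_neg (by omega), sub_zero]
      exact zero_mem M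
    · set L : ℕ := j - i with hLdef
      have hre : ∑ k ∈ Finset.Ioo ((-1:ℤ) - ((j:ℤ)-1) - 1) (-(i:ℤ)+1),
            genBinom k ((((j:ℤ)-1) - (-1) + k).toNat)
              • (S i k * (⇑d)^[(((j:ℤ)-1) - (-1) + k).toNat] (δ (v j)))
          = ∑ s ∈ Finset.range (L+1),
            genBinom (-(i:ℤ) - (s:ℤ)) (L - s) • (S i (-(i:ℤ) - (s:ℤ)) * (⇑d)^[L - s] (δ (v j))) := by
        refine Finset.sum_nbij' (fun k => (-(i:ℤ) - k).toNat) (fun s => -(i:ℤ) - (s:ℤ))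
          ?_ ?_ ?_ ?_ ?_
        · intro k hk; rw [Finset.mem_Ioo] at hk; rw [Finset.mem_range]; omega
        · intro s hs; rw [Finset.mem_range] at hs; rw [Finset.mem_Ioo]; omega
        · intro k hk; rw [Finset.mem_Ioo] at hk; omega
        · intro s hs; rw [Finset.mem_range] at hs; omega
        · intro k hk; rw [Finset.mem_Ioo] at hk
          have h2 : (-(i:ℤ) - (((-(i:ℤ) - k).toNat : ℕ) : ℤ)) = k := by omega
          rw [show (((j:ℤ)-1) - (-1) + k).toNat = L - (-(i:ℤ) - k).toNat from by omega, h2]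
      rw [hre]
      have hterm : ∀ s ∈ Finset.range (L+1),
          genBinom (-(i:ℤ) - (s:ℤ)) (L - s) • (S i (-(i:ℤ) - (s:ℤ)) * (⇑d)^[L - s] (δ (v j)))
            = genBinom (-(i:ℤ)) L • ((L.choose s : ℚ) • ((⇑d)^[s] (Ev i) * (⇑d)^[L - s] (δ (v j)))) := by
        intro s hs
        rw [Finset.mem_range] at hs
        rw [hSval, if_pos (by omega : -(i:ℤ) - (s:ℤ) ≤ -(i:ℤ)),
          show (-(i:ℤ) - (-(i:ℤ) - (s:ℤ))).toNat = s from by omega]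
        rw [smul_mul_assoc, smul_smul, smul_smul]
        congr 1
        rw [mul_comm, genBinom_mul (-(i:ℤ)) (by omega : s ≤ L)]
        ring
      rw [Finset.sum_congr rfl hterm, ← Finset.smul_sum, ← it_leibniz d (Ev i) (δ (v j)) L]
      rcases eq_or_ne j i with rfl | hne
      · have hL0 : L = 0 := by omega
        rw [if_pos rfl, hL0]
        simp only [genBinom_zero', one_smul, Function.iterate_zero_apply]
        rw [sub_self]
        exact zero_mem M
      · rw [if_neg hne, sub_zero]
        have hL1 : L = (L - 1) + 1 := by omega
        rw [hL1, Function.iterate_succ_apply', ← Derivation.map_smul]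
        exact hMd _
  have hdouble : (∑ i ∈ Finset.Icc 1 n, ∑ j ∈ Finset.Icc 1 n, pdoMul (⇑d) (S i) (P j) (-1))
      - (∑ i ∈ Finset.Icc 1 n, Ev i * δ (v i)) ∈ M := by
    have e : ∑ i ∈ Finset.Icc 1 n, Ev i * δ (v i)
        = ∑ i ∈ Finset.Icc 1 n, ∑ j ∈ Finset.Icc 1 n, (if j = i then Ev i * δ (v i) else 0) := by
      refine Finset.sum_congr rfl fun i hi => ?_
      rw [Finset.sum_ite_eq' (Finset.Icc 1 n) i (fun _ => Ev i * δ (v i)), if_pos hi]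
    rw [e, ← Finset.sum_sub_distrib]
    refine Submodule.sum_mem M fun i hi => ?_
    rw [← Finset.sum_sub_distrib]
    exact Submodule.sum_mem M fun j hj => hr i hi j hj
  -- assemble
  have hRES : pdoRes (pdoMul (⇑d) (X1 + X2 + X3) (Y1 + Y2 + Y3))
      = (∑ i ∈ Finset.Icc 1 n, ∑ j ∈ Finset.Icc 1 n, pdoMul (⇑d) (S i) (P j) (-1))
        + Eu * δ u + Ew * δ w := by
    rw [pdoRes, hsplit, hT11, hT12, hT13, hT21, hT22, hT23, hT31, hT32, hT33]
    ring
  have hrange : Set.range (⇑d) = (M : Set R) := by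
    rw [hMdef]
    ext x
    simp [LinearMap.mem_range]
  rw [hrange] at hvar ⊢
  rw [hRES]
  have hfinal : δ f - ((∑ i ∈ Finset.Icc 1 n, ∑ j ∈ Finset.Icc 1 n, pdoMul (⇑d) (S i) (P j) (-1))
        + Eu * δ u + Ew * δ w)
      = (δ f - ((∑ i ∈ Finset.Icc 1 n, Ev i * δ (v i)) + Eu * δ u + Ew * δ w))
        - ((∑ i ∈ Finset.Icc 1 n, ∑ j ∈ Finset.Icc 1 n, pdoMul (⇑d) (S i) (P j) (-1))
            - (∑ i ∈ Finset.Icc 1 n, Ev i * δ (v i))) := by ring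
  rw [hfinal]
  exact sub_mem hvar hdouble
end
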